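/- The singular Cauchy problem 3x·ψ'' + 6x·(ψ')³ − 4ψ·(ψ')² − 3ψ' = 0 with ψ(0) = 1 and ψ'(0) = −3/4 has a unique real-analytic solution ψ(x) in a neighbourhood of x = 0. -/

import Mathlib

/-- `ψ` is an analytic solution near `0` of the singular Cauchy problem
`3x ψ'' + 6x (ψ')³ − 4ψ (ψ')² − 3ψ' = 0`, `ψ(0) = 1`, `ψ'(0) = −3/4`. -/
def GavrilovODE (ψ : ℝ → ℝ) : Prop :=
  AnalyticAt ℝ ψ 0 ∧ ψ 0 = 1 ∧ deriv ψ 0 = -(3/4) ∧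
    ∀ᶠ x in nhds (0:ℝ),
      3 * x * deriv (deriv ψ) x + 6 * x * (deriv ψ x)^3
        - 4 * ψ x * (deriv ψ x)^2 - 3 * deriv ψ x = 0

open Filter Finset
open scoped Topology

noncomputable section GavAux

namespace Gav



/-- Sum of the power series with coefficients `c`. -/
def S (c : ℕ → ℝ) (x : ℝ) : ℝ := ∑' n, c n * x ^ n

/-- Coefficients of the derivative series. -/
def shift (c : ℕ → ℝ) : ℕ → ℝ := fun n => ((n : ℝ) + 1) * c (n + 1)

/-- Coefficients of `x * f(x)`. -/
def xshift (c : ℕ → ℝ) : ℕ → ℝ := fun n => match n with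
  | 0 => 0
  | k + 1 => c k

/-- Cauchy product of coefficient sequences. -/
def conv (c d : ℕ → ℝ) : ℕ → ℝ := fun n => ∑ k ∈ range (n + 1), c k * d (n - k)

/-- Geometric bound on the coefficients. -/
def Geo (c : ℕ → ℝ) : Prop := ∃ C M : ℝ, 0 < C ∧ 1 ≤ M ∧ ∀ n, |c n| ≤ C * M ^ n

lemma nat_succ_le_two_pow (n : ℕ) : ((n : ℝ) + 1) ≤ 2 ^ n := by
  have := Nat.lt_two_pow_self (n := n)
  exact_mod_cast Nat.succ_le_of_lt this

namespace Geo

lemma shift {c : ℕ → ℝ} (h : Geo c) : Geo (Gav.shift c) := by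
  obtain ⟨C, M, hC, hM, hb⟩ := h
  refine ⟨C * M, 2 * M, by positivity, by linarith, fun n => ?_⟩
  have h1 : |Gav.shift c n| = ((n : ℝ) + 1) * |c (n + 1)| := by
    rw [Gav.shift, abs_mul, abs_of_nonneg (by positivity)]
  have h2 := nat_succ_le_two_pow n
  have h3 := hb (n + 1)
  have hM0 : (0:ℝ) < M := by linarith
  calc |Gav.shift c n| = ((n : ℝ) + 1) * |c (n + 1)| := h1
    _ ≤ 2 ^ n * (C * M ^ (n+1)) := by
        apply mul_le_mul h2 h3 (abs_nonneg _) (by positivity)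
    _ = C * M * (2 * M) ^ n := by rw [mul_pow]; ring

lemma xshift {c : ℕ → ℝ} (h : Geo c) : Geo (Gav.xshift c) := by
  obtain ⟨C, M, hC, hM, hb⟩ := h
  refine ⟨C, M, hC, hM, fun n => ?_⟩
  match n with
  | 0 => simpa [Gav.xshift] using by positivity
  | k + 1 =>
    have : |Gav.xshift c (k+1)| = |c k| := rfl
    rw [this]
    calc |c k| ≤ C * M ^ k := hb k
      _ ≤ C * M ^ (k+1) := by
          apply mul_le_mul_of_nonneg_left _ hC.le
          exact pow_le_pow_right₀ hM (Nat.le_succ k)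

lemma conv {c d : ℕ → ℝ} (hc : Geo c) (hd : Geo d) : Geo (Gav.conv c d) := by
  obtain ⟨C, M, hC, hM, hbc⟩ := hc
  obtain ⟨D, N, hD, hN, hbd⟩ := hd
  set K := max M N with hK
  have hK1 : 1 ≤ K := le_trans hM (le_max_left _ _)
  refine ⟨C * D, 2 * K, by positivity, by linarith, fun n => ?_⟩
  have step : ∀ k ∈ range (n+1), |c k * d (n - k)| ≤ C * D * K ^ n := by
    intro k hk
    have hkn : k ≤ n := Nat.lt_succ_iff.mp (mem_range.mp hk)
    rw [abs_mul]
    calc |c k| * |d (n - k)| ≤ (C * M ^ k) * (D * N ^ (n - k)) :=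
          mul_le_mul (hbc k) (hbd (n-k)) (abs_nonneg _) (by positivity)
      _ ≤ (C * K ^ k) * (D * K ^ (n - k)) := by
          apply mul_le_mul _ _ (by positivity) (by positivity)
          · exact mul_le_mul_of_nonneg_left (pow_le_pow_left₀ (by linarith) (le_max_left _ _) k) hC.le
          · exact mul_le_mul_of_nonneg_left (pow_le_pow_left₀ (by linarith) (le_max_right _ _) _) hD.le
      _ = C * D * K ^ n := by
          rw [show (C * K ^ k) * (D * K ^ (n-k)) = C * D * (K ^ k * K ^ (n-k)) by ring,
            ← pow_add, Nat.add_sub_cancel' hkn]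
  calc |Gav.conv c d n| ≤ ∑ k ∈ range (n+1), |c k * d (n - k)| := abs_sum_le_sum_abs _ _
    _ ≤ ∑ _k ∈ range (n+1), C * D * K ^ n := Finset.sum_le_sum step
    _ = ((n:ℝ) + 1) * (C * D * K ^ n) := by
        rw [Finset.sum_const, card_range]; push_cast; ring
    _ ≤ 2 ^ n * (C * D * K ^ n) := by
        apply mul_le_mul_of_nonneg_right (nat_succ_le_two_pow n) (by positivity)
    _ = C * D * (2 * K) ^ n := by rw [mul_pow]; ring

lemma const_mul {c : ℕ → ℝ} (h : Geo c) (k : ℝ) : Geo (fun n => k * c n) := by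
  obtain ⟨C, M, hC, hM, hb⟩ := h
  refine ⟨C * (|k| + 1), M, by positivity, hM, fun n => ?_⟩
  rw [abs_mul]
  calc |k| * |c n| ≤ (|k| + 1) * (C * M ^ n) := by
        apply mul_le_mul (by linarith) (hb n) (abs_nonneg _) (by positivity)
    _ = C * (|k| + 1) * M ^ n := by ring

lemma add {c d : ℕ → ℝ} (hc : Geo c) (hd : Geo d) : Geo (fun n => c n + d n) := by
  obtain ⟨C, M, hC, hM, hbc⟩ := hc
  obtain ⟨D, N, hD, hN, hbd⟩ := hd
  refine ⟨C + D, max M N, by positivity, le_trans hM (le_max_left _ _), fun n => ?_⟩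
  calc |c n + d n| ≤ |c n| + |d n| := abs_add_le _ _
    _ ≤ C * M ^ n + D * N ^ n := add_le_add (hbc n) (hbd n)
    _ ≤ C * (max M N) ^ n + D * (max M N) ^ n := by
        apply add_le_add
        · exact mul_le_mul_of_nonneg_left (pow_le_pow_left₀ (by linarith) (le_max_left _ _) n) hC.le
        · exact mul_le_mul_of_nonneg_left (pow_le_pow_left₀ (by linarith) (le_max_right _ _) n) hD.le
    _ = (C + D) * (max M N) ^ n := by ring

lemma sub {c d : ℕ → ℝ} (hc : Geo c) (hd : Geo d) : Geo (fun n => c n - d n) := by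
  have := hc.add (hd.const_mul (-1))
  simpa [sub_eq_add_neg] using this

end Geo


section Summ

variable {c d : ℕ → ℝ} {C M x : ℝ}

lemma summable_norm_aux (hb : ∀ n, |c n| ≤ C * M ^ n) (hM : 0 < M)
    (hx : M * |x| < 1) : Summable (fun n => ‖c n * x ^ n‖) := by
  have h0 : 0 ≤ M * |x| := by positivity
  refine Summable.of_nonneg_of_le (fun n => norm_nonneg _) (fun n => ?_)
    ((summable_geometric_of_lt_one h0 hx).mul_left C)
  rw [Real.norm_eq_abs, abs_mul, abs_pow, mul_pow]
  calc |c n| * |x| ^ n ≤ (C * M ^ n) * |x| ^ n := by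
        apply mul_le_mul_of_nonneg_right (hb n) (by positivity)
    _ = C * (M ^ n * |x| ^ n) := by ring

lemma summable_aux (hb : ∀ n, |c n| ≤ C * M ^ n) (hM : 0 < M)
    (hx : M * |x| < 1) : Summable (fun n => c n * x ^ n) :=
  (summable_norm_aux hb hM hx).of_norm

lemma S_zero (c : ℕ → ℝ) : S c 0 = c 0 := by
  rw [S, tsum_eq_single 0 (fun n hn => by simp [zero_pow hn])]
  simp

/-- Cauchy product of two power series. -/
lemma S_mul {D N : ℝ} (hbc : ∀ n, |c n| ≤ C * M ^ n) (hM : 0 < M)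
    (hbd : ∀ n, |d n| ≤ D * N ^ n) (hN : 0 < N)
    (hx : M * |x| < 1) (hx' : N * |x| < 1) :
    S c x * S d x = S (conv c d) x := by
  rw [S, S, S,
    tsum_mul_tsum_eq_tsum_sum_range_of_summable_norm
      (summable_norm_aux hbc hM hx) (summable_norm_aux hbd hN hx')]
  apply tsum_congr
  intro n
  rw [conv, Finset.sum_mul]
  apply Finset.sum_congr rfl
  intro k hk
  have hkn : k ≤ n := Nat.lt_succ_iff.mp (mem_range.mp hk)
  rw [show c k * d (n-k) * x ^ n = c k * d (n-k) * (x ^ k * x ^ (n-k)) by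
    rw [← pow_add, Nat.add_sub_cancel' hkn]]
  ring

lemma S_xshift (hb : ∀ n, |c n| ≤ C * M ^ n) (hM : 0 < M)
    (hx : M * |x| < 1) : S (xshift c) x = x * S c x := by
  have hsum : Summable (fun n => c n * x ^ n) := summable_aux hb hM hx
  have hsum2 : Summable (fun n => xshift c (n+1) * x ^ (n+1)) := by
    have he : (fun n => xshift c (n+1) * x ^ (n+1)) = (fun n => x * (c n * x ^ n)) := by
      funext n; show c n * x ^ (n+1) = _; rw [pow_succ]; ring
    rw [he]
    exact hsum.mul_left x
  have h0 : Summable (fun n => xshift c n * x ^ n) :=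
    (summable_nat_add_iff 1).mp hsum2
  rw [S, Summable.tsum_eq_zero_add h0]
  show xshift c 0 * x ^ 0 + ∑' n, xshift c (n+1) * x ^ (n+1) = _
  have he2 : ∑' n, xshift c (n+1) * x ^ (n+1) = ∑' n, x * (c n * x ^ n) := by
    apply tsum_congr; intro n
    show c n * x ^ (n+1) = _
    rw [pow_succ]; ring
  rw [he2, tsum_mul_left]
  simp [xshift, S]

lemma S_add (hc : Summable (fun n => c n * x ^ n)) (hd : Summable (fun n => d n * x ^ n)) :
    S (fun n => c n + d n) x = S c x + S d x := by
  rw [S, S, S, ← Summable.tsum_add hc hd]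
  apply tsum_congr; intro n; ring

lemma S_sub (hc : Summable (fun n => c n * x ^ n)) (hd : Summable (fun n => d n * x ^ n)) :
    S (fun n => c n - d n) x = S c x - S d x := by
  rw [S, S, S, ← Summable.tsum_sub hc hd]
  apply tsum_congr; intro n; ring

lemma S_const_mul (k : ℝ) :
    S (fun n => k * c n) x = k * S c x := by
  rw [S, S, ← tsum_mul_left]
  apply tsum_congr; intro n; ring

private lemma deriv_term_bound (hb : ∀ n, |c n| ≤ C * M ^ n) (hC : 0 < C) (hM : 1 ≤ M)
    {z : ℝ} (hz : |z| ≤ (2*M)⁻¹) (n : ℕ) :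
    ‖c n * ((n:ℝ) * z ^ (n-1))‖ ≤ C * M * 2 * ((n:ℝ) * 2⁻¹ ^ n) := by
  have hM0 : (0:ℝ) < M := by linarith
  match n with
  | 0 => simp
  | k + 1 =>
    simp only [Nat.add_sub_cancel]
    rw [Real.norm_eq_abs, abs_mul, abs_mul, abs_pow,
      abs_of_nonneg (show (0:ℝ) ≤ ((k+1:ℕ):ℝ) from Nat.cast_nonneg _)]
    have hzn : |z| ^ k ≤ ((2*M)⁻¹) ^ k := pow_le_pow_left₀ (abs_nonneg z) hz _
    have step : |c (k+1)| * (((k+1:ℕ):ℝ) * |z| ^ k)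
        ≤ (C * M ^ (k+1)) * (((k+1:ℕ):ℝ) * ((2*M)⁻¹) ^ k) := by
      apply mul_le_mul (hb (k+1)) _ (by positivity) (by positivity)
      exact mul_le_mul_of_nonneg_left hzn (Nat.cast_nonneg _)
    refine step.trans (le_of_eq ?_)
    have h2M : ((2:ℝ)*M) ≠ 0 := by positivity
    rw [mul_inv, mul_pow]
    field_simp
    have e : M ^ k * (1 / M) ^ k = 1 := by rw [← mul_pow, mul_one_div_cancel hM0.ne', one_pow]
    linear_combination (M * (1 / 2) ^ k) * e

private lemma summable_deriv_bound (hC : 0 < C) (hM : 1 ≤ M) :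
    Summable (fun n : ℕ => C * M * 2 * ((n:ℝ) * 2⁻¹ ^ n)) := by
  have h2 : ‖(2⁻¹ : ℝ)‖ < 1 := by rw [Real.norm_eq_abs, abs_of_pos] <;> norm_num
  have h1 : Summable (fun n : ℕ => (n:ℝ) * 2⁻¹ ^ n) := by
    simpa using summable_pow_mul_geometric_of_norm_lt_one 1 h2
  exact h1.mul_left _

/-- Term-by-term differentiation. -/
lemma hasDerivAt_S (hb : ∀ n, |c n| ≤ C * M ^ n) (hC : 0 < C) (hM : 1 ≤ M)
    (hx : |x| < (2*M)⁻¹) : HasDerivAt (S c) (S (shift c) x) x := by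
  have hM0 : (0:ℝ) < M := by linarith
  have hr : (0:ℝ) < (2*M)⁻¹ := by positivity
  have hxt : x ∈ Metric.ball (0:ℝ) ((2*M)⁻¹) := by
    simpa [Real.dist_eq] using hx
  have h0t : (0:ℝ) ∈ Metric.ball (0:ℝ) ((2*M)⁻¹) := by
    simpa using hr
  have key : HasDerivAt (fun z => ∑' n, c n * z ^ n) (∑' n, c n * ((n:ℝ) * x ^ (n-1))) x := by
    apply hasDerivAt_tsum_of_isPreconnected (summable_deriv_bound hC hM)
      Metric.isOpen_ball ((convex_ball (0:ℝ) _).isPreconnected)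
      (g := fun n y => c n * y ^ n) (g' := fun n y => c n * ((n:ℝ) * y ^ (n-1)))
      ?_ ?_ h0t ?_ hxt
    · intro n z _
      exact (hasDerivAt_pow n z).const_mul (c n)
    · intro n z hz
      have hz' : |z| ≤ (2*M)⁻¹ := by
        have := Metric.mem_ball.mp hz
        rw [Real.dist_eq, sub_zero] at this
        exact this.le
      exact deriv_term_bound hb hC hM hz' n
    · apply summable_aux hb hM0
      simp
  have hs : HasDerivAt (S c) (∑' n, c n * ((n:ℝ) * x ^ (n-1))) x := key
  convert hs using 1
  have hsum' : Summable (fun n => c n * ((n:ℝ) * x ^ (n-1))) := by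
    apply Summable.of_norm
    apply Summable.of_nonneg_of_le (fun n => norm_nonneg _)
      (fun n => deriv_term_bound hb hC hM hx.le n) (summable_deriv_bound hC hM)
  rw [S, Summable.tsum_eq_zero_add hsum']
  norm_num
  apply tsum_congr
  intro n
  rw [shift]
  push_cast
  try simp only [Nat.add_sub_cancel]
  ring

end Summ


lemma ofScalars_coeff (c : ℕ → ℝ) (n : ℕ) :
    (FormalMultilinearSeries.ofScalars ℝ c).coeff n = c n := by
  rw [FormalMultilinearSeries.coeff]
  have : (1 : Fin n → ℝ) = fun _ => (1:ℝ) := rfl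
  rw [this, FormalMultilinearSeries.ofScalars_apply_eq]
  simp

lemma hasFPowerSeriesAt_S (h : Geo c) :
    HasFPowerSeriesAt (S c) (FormalMultilinearSeries.ofScalars ℝ c) 0 := by
  obtain ⟨C, M, hC, hM, hb⟩ := h
  have hM0 : (0:ℝ) < M := by linarith
  rw [hasFPowerSeriesAt_iff]
  rw [Metric.eventually_nhds_iff]
  refine ⟨M⁻¹, by positivity, fun {z} hz => ?_⟩
  rw [dist_zero_right, Real.norm_eq_abs] at hz
  have hz' : M * |z| < 1 := by
    have := (mul_lt_mul_iff_right₀ hM0).mpr hz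
    rwa [mul_inv_cancel₀ (ne_of_gt hM0)] at this
  have hs := (summable_aux hb hM0 hz').hasSum
  have he : (fun n => z ^ n • (FormalMultilinearSeries.ofScalars ℝ c).coeff n)
      = fun n => c n * z ^ n := by
    funext n
    rw [ofScalars_coeff, smul_eq_mul, mul_comm]
  rw [he, zero_add]
  exact hs

lemma analyticAt_S (h : Geo c) : AnalyticAt ℝ (S c) 0 :=
  (hasFPowerSeriesAt_S h).analyticAt

lemma coeff_eq_zero_of_S_zero (h : Geo c) (hz : S c =ᶠ[𝓝 (0:ℝ)] 0) : ∀ n, c n = 0 := by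
  have h1 := hasFPowerSeriesAt_S h
  have h2 : FormalMultilinearSeries.ofScalars ℝ c = 0 := h1.eq_zero_of_eventually hz
  intro n
  have := (FormalMultilinearSeries.ofScalars_series_eq_zero (𝕜 := ℝ) ℝ).mp h2
  exact congrFun this n

lemma exists_geo_coeffs {φ : ℝ → ℝ} (h : AnalyticAt ℝ φ 0) :
    ∃ c : ℕ → ℝ, Geo c ∧ φ =ᶠ[𝓝 (0:ℝ)] S c := by
  obtain ⟨p, hp⟩ := h
  have hrad : 0 < p.radius := hp.radius_pos
  obtain ⟨r, hr0, hrlt⟩ := ENNReal.lt_iff_exists_nnreal_btwn.mp hrad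
  have hr0' : 0 < r := by
    have := hr0
    simpa using this
  obtain ⟨C, hC0, hC⟩ := p.norm_mul_pow_le_of_lt_radius hrlt
  set c : ℕ → ℝ := fun n => p.coeff n with hc
  have hrr : (0:ℝ) < (r:ℝ) := hr0'
  refine ⟨c, ⟨C, max (r:ℝ)⁻¹ 1, hC0, le_max_right _ _, fun n => ?_⟩, ?_⟩
  · have h1 : ‖p.coeff n‖ ≤ ‖p n‖ := by
      rw [FormalMultilinearSeries.coeff]
      calc ‖p n 1‖ ≤ ‖p n‖ * ∏ _i : Fin n, ‖(1:ℝ)‖ := (p n).le_opNorm 1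
        _ = ‖p n‖ := by simp
    have h2 : ‖p n‖ ≤ C * ((r:ℝ)⁻¹) ^ n := by
      have hpow : (0:ℝ) < (r:ℝ) ^ n := by positivity
      calc ‖p n‖ ≤ C / (r:ℝ) ^ n := (le_div_iff₀ hpow).mpr (hC n)
        _ = C * ((r:ℝ)⁻¹) ^ n := by rw [div_eq_mul_inv, inv_pow]
    calc |c n| = ‖p.coeff n‖ := rfl
      _ ≤ ‖p n‖ := h1
      _ ≤ C * ((r:ℝ)⁻¹) ^ n := h2
      _ ≤ C * (max (r:ℝ)⁻¹ 1) ^ n := by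
          apply mul_le_mul_of_nonneg_left _ hC0.le
          exact pow_le_pow_left₀ (by positivity) (le_max_left _ _) n
  · have h3 := hasFPowerSeriesAt_iff.mp hp
    filter_upwards [h3] with z hz
    rw [zero_add] at hz
    have he : (fun n => z ^ n • p.coeff n) = fun n => c n * z ^ n := by
      funext n; rw [smul_eq_mul, mul_comm]
    rw [he] at hz
    exact hz.tsum_eq.symm


/-- The coefficient sequence of `3x f'' + 6x (f')³ − 4 f (f')² − 3 f'` where `f = S c`. -/
def Eop (c : ℕ → ℝ) : ℕ → ℝ := fun n =>
  3 * xshift (shift (shift c)) n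
    + 6 * xshift (conv (shift c) (conv (shift c) (shift c))) n
    - 4 * conv c (conv (shift c) (shift c)) n
    - 3 * shift c n

/-- The part of `Eop c (m+1)` not involving `c (m+2)`. -/
def low (c : ℕ → ℝ) (m : ℕ) : ℝ :=
  6 * conv (shift c) (conv (shift c) (shift c)) m
    - 4 * (c 0 * ∑ i ∈ range m, shift c (i+1) * shift c (m - i)
           + ∑ i ∈ range (m+1), c (i+1) * conv (shift c) (shift c) (m - i))

lemma conv_succ_split (p : ℕ → ℝ) (m : ℕ) :
    conv p p (m+1) = 2 * (p 0 * p (m+1)) + ∑ i ∈ range m, p (i+1) * p (m - i) := by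
  rw [conv, Finset.sum_range_succ']
  have h1 : ∀ i, (m + 1) - (i + 1) = m - i := fun i => Nat.succ_sub_succ m i
  have h2 : (∑ i ∈ range (m+1), p (i+1) * p ((m+1) - (i+1)))
      = ∑ i ∈ range (m+1), p (i+1) * p (m - i) := by
    apply Finset.sum_congr rfl; intro i _; rw [h1]
  rw [h2, Finset.sum_range_succ]
  simp only [Nat.sub_self, Nat.sub_zero]
  ring

lemma conv_c_split (c q : ℕ → ℝ) (m : ℕ) :
    conv c q (m+1) = c 0 * q (m+1) + ∑ i ∈ range (m+1), c (i+1) * q (m - i) := by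
  rw [conv, Finset.sum_range_succ']
  have h2 : (∑ i ∈ range (m+1), c (i+1) * q ((m+1) - (i+1)))
      = ∑ i ∈ range (m+1), c (i+1) * q (m - i) := by
    apply Finset.sum_congr rfl; intro i _; rw [Nat.succ_sub_succ]
  rw [h2]
  simp only [Nat.sub_zero]
  ring

/-- Key decomposition of `Eop` at a successor index. -/
lemma Eop_succ (c : ℕ → ℝ) (m : ℕ) :
    Eop c (m+1) = (3 * (m:ℝ) - 8 * c 0 * c 1) * shift c (m+1) + low c m := by
  have hx1 : xshift (shift (shift c)) (m+1) = shift (shift c) m := rfl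
  have hx2 : xshift (conv (shift c) (conv (shift c) (shift c))) (m+1)
      = conv (shift c) (conv (shift c) (shift c)) m := rfl
  have hshift : shift (shift c) m = ((m:ℝ) + 1) * shift c (m+1) := rfl
  have hp0 : shift c 0 = c 1 := by simp [shift]
  rw [Eop, hx1, hx2, hshift, low,
    conv_c_split c (conv (shift c) (shift c)) m,
    conv_succ_split (shift c) m, hp0]
  ring

/-- The unique formal solution coefficients. -/
def gavA : ℕ → ℝ
  | 0 => 1
  | 1 => -(3/4)
  | m + 2 => -(low (fun i => if h : i < m + 2 then gavA i else 0) m) / (3 * ((m:ℝ) + 2)^2)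
  decreasing_by exact h

lemma gavA_zero : gavA 0 = 1 := by rw [gavA]
lemma gavA_one : gavA 1 = -(3/4) := by rw [gavA]

/-- `low` only depends on the first `m+2` coefficients. -/
lemma low_congr {c d : ℕ → ℝ} {m : ℕ} (h : ∀ i, i ≤ m + 1 → c i = d i) :
    low c m = low d m := by
  have hs : ∀ i, i ≤ m → shift c i = shift d i := by
    intro i hi
    rw [shift, shift, h (i+1) (by omega)]
  have hcv : ∀ j, j ≤ m → conv (shift c) (shift c) j = conv (shift d) (shift d) j := by
    intro j hj
    rw [conv, conv]
    apply Finset.sum_congr rfl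
    intro k hk
    have hk' : k ≤ j := Nat.lt_succ_iff.mp (mem_range.mp hk)
    rw [hs k (by omega), hs (j-k) (by omega)]
  rw [low, low]
  congr 1
  · -- 6 * conv (shift c) (conv ...) m = same for d
    congr 1
    rw [conv, conv]
    apply Finset.sum_congr rfl
    intro k hk
    have hk' : k ≤ m := Nat.lt_succ_iff.mp (mem_range.mp hk)
    rw [hs k hk', hcv (m-k) (by omega)]
  · congr 1
    congr 1
    · rw [h 0 (by omega)]
      congr 1
      apply Finset.sum_congr rfl
      intro i hi
      have hi' : i < m := mem_range.mp hi
      rw [hs (i+1) (by omega), hs (m-i) (by omega)]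
    · apply Finset.sum_congr rfl
      intro i hi
      have hi' : i ≤ m := Nat.lt_succ_iff.mp (mem_range.mp hi)
      rw [h (i+1) (by omega), hcv (m-i) (by omega)]

lemma gavA_rec (m : ℕ) : gavA (m+2) = -(low gavA m) / (3 * ((m:ℝ) + 2)^2) := by
  rw [gavA]
  congr 1
  congr 1
  apply low_congr
  intro i hi
  rw [dif_pos (by omega : i < m + 2)]

lemma shift_gavA_zero : shift gavA 0 = -(3/4) := by
  simp [shift, gavA_one]

lemma Eop_gavA_zero_aux (c : ℕ → ℝ) (h0 : c 0 = 1) (h1 : c 1 = -(3/4)) : Eop c 0 = 0 := by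
  have : conv c (conv (shift c) (shift c)) 0 = c 0 * (c 1 * c 1) := by
    simp [conv, shift]
  rw [Eop, this]
  have hx0 : xshift (shift (shift c)) 0 = 0 := rfl
  have hx0' : xshift (conv (shift c) (conv (shift c) (shift c))) 0 = 0 := rfl
  have hp0 : shift c 0 = c 1 := by simp [shift]
  rw [hx0, hx0', hp0, h0, h1]
  norm_num

lemma Eop_gavA : ∀ n, Eop gavA n = 0 := by
  intro n
  match n with
  | 0 => exact Eop_gavA_zero_aux gavA gavA_zero gavA_one
  | m + 1 =>
    rw [Eop_succ, gavA_zero, gavA_one]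
    have hsh : shift gavA (m+1) = ((m:ℝ) + 2) * gavA (m+2) := by
      rw [shift]; push_cast; ring_nf
    rw [hsh, gavA_rec m]
    have hm2 : ((m:ℝ) + 2) ≠ 0 := by positivity
    field_simp
    ring

/-- Any coefficient sequence with the right initial data solving the recursion is `gavA`. -/
lemma coeff_unique {c : ℕ → ℝ} (h0 : c 0 = 1) (h1 : c 1 = -(3/4))
    (hE : ∀ n, Eop c n = 0) : ∀ n, c n = gavA n := by
  intro n
  induction n using Nat.strong_induction_on with
  | _ n ih =>
    match n with
    | 0 => rw [h0, gavA_zero]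
    | 1 => rw [h1, gavA_one]
    | m + 2 =>
      have hlow : low c m = low gavA m := low_congr (fun i hi => ih i (by omega))
      have hEm := hE (m+1)
      rw [Eop_succ, h0, h1, hlow] at hEm
      have hsh : shift c (m+1) = ((m:ℝ) + 2) * c (m+2) := by
        rw [shift]; push_cast; ring_nf
      rw [hsh] at hEm
      rw [gavA_rec m]
      have hm2 : ((m:ℝ) + 2) ≠ 0 := by positivity
      have hco : (3 * (m:ℝ) - 8 * 1 * -(3/4)) = 3 * ((m:ℝ) + 2) := by ring
      rw [hco] at hEm
      -- hEm : 3*(m+2) * ((m+2) * c (m+2)) + low gavA m = 0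
      field_simp
      nlinarith [hEm]


/-- Majorant weights. -/
def g (n : ℕ) : ℝ := (((n:ℝ) + 1)^2)⁻¹

lemma g_pos (n : ℕ) : 0 < g n := by rw [g]; positivity

lemma g_zero : g 0 = 1 := by norm_num [g]

lemma g_le_one (n : ℕ) : g n ≤ 1 := by
  rw [g]
  rw [inv_le_one_iff₀]
  right
  nlinarith [Nat.cast_nonneg (α := ℝ) n]

lemma g_succ_le (m : ℕ) : g m ≤ 4 * g (m+1) := by
  rw [g, g]
  push_cast
  rw [show (4:ℝ) * ((((m:ℝ))+1+1)^2)⁻¹ = (((((m:ℝ))+1+1)^2)/4)⁻¹ by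
    rw [inv_div, div_eq_mul_inv]]
  apply inv_anti₀ (by positivity)
  nlinarith [Nat.cast_nonneg (α := ℝ) m]

lemma sum_g_aux : ∀ N : ℕ, ∑ k ∈ range (N+1), g k ≤ 2 - ((N:ℝ)+1)⁻¹ := by
  intro N
  induction N with
  | zero => norm_num [g_zero]
  | succ N ih =>
    rw [Finset.sum_range_succ]
    have key : g (N+1) ≤ ((N:ℝ)+1)⁻¹ - ((N:ℝ)+2)⁻¹ := by
      have he : ((N:ℝ)+1)⁻¹ - ((N:ℝ)+2)⁻¹ = (((N:ℝ)+1) * ((N:ℝ)+2))⁻¹ := by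
        field_simp
        norm_num
      rw [he, g]
      push_cast
      apply inv_anti₀ (by positivity)
      nlinarith [Nat.cast_nonneg (α := ℝ) N]
    push_cast
    push_cast at ih
    have hN : ((N:ℝ)+1+1) = (N:ℝ)+2 := by ring
    rw [hN]
    linarith

lemma sum_g_le (N : ℕ) : ∑ k ∈ range N, g k ≤ 2 := by
  match N with
  | 0 => simp
  | N + 1 =>
    have := sum_g_aux N
    have h2 : (0:ℝ) < (N:ℝ)+1 := by positivity
    have : (2:ℝ) - ((N:ℝ)+1)⁻¹ ≤ 2 := by
      have : (0:ℝ) ≤ ((N:ℝ)+1)⁻¹ := by positivity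
      linarith
    linarith [sum_g_aux N]

/-- key per-term estimate. -/
lemma g_mul_g_le {k n : ℕ} (hk : k ≤ n) :
    g k * g (n-k) ≤ 4 * g n * (g k + g (n-k)) := by
  have hcast : ((n - k : ℕ) : ℝ) = (n:ℝ) - (k:ℝ) := by
    push_cast [Nat.cast_sub hk]; ring
  rcases le_or_gt (2*k) n with h | h
  · -- n - k is large: g (n-k) ≤ 4 g n
    have hbig : g (n-k) ≤ 4 * g n := by
      rw [g, g, hcast]
      rw [show (4:ℝ) * ((((n:ℝ))+1)^2)⁻¹ = (((((n:ℝ))+1)^2)/4)⁻¹ by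
        rw [inv_div, div_eq_mul_inv]]
      apply inv_anti₀ (by positivity)
      have h2 : (2:ℝ) * (k:ℝ) ≤ (n:ℝ) := by exact_mod_cast h
      nlinarith [Nat.cast_nonneg (α := ℝ) k, Nat.cast_nonneg (α := ℝ) n]
    calc g k * g (n-k) ≤ g k * (4 * g n) := by
          apply mul_le_mul_of_nonneg_left hbig (g_pos k).le
      _ = 4 * g n * g k := by ring
      _ ≤ 4 * g n * (g k + g (n-k)) := by
          apply mul_le_mul_of_nonneg_left _ (mul_nonneg (by norm_num) (g_pos n).le)
          linarith [(g_pos (n-k)).le]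
  · have hbig : g k ≤ 4 * g n := by
      rw [g, g]
      rw [show (4:ℝ) * ((((n:ℝ))+1)^2)⁻¹ = (((((n:ℝ))+1)^2)/4)⁻¹ by
        rw [inv_div, div_eq_mul_inv]]
      apply inv_anti₀ (by positivity)
      have h2 : (n:ℝ) < 2 * (k:ℝ) := by exact_mod_cast h
      nlinarith [Nat.cast_nonneg (α := ℝ) k, Nat.cast_nonneg (α := ℝ) n]
    calc g k * g (n-k) ≤ (4 * g n) * g (n-k) := by
          apply mul_le_mul_of_nonneg_right hbig (g_pos _).le
      _ ≤ 4 * g n * (g k + g (n-k)) := by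
          apply mul_le_mul_of_nonneg_left _ (mul_nonneg (by norm_num) (g_pos n).le)
          linarith [(g_pos k).le]

lemma conv_g_le (n : ℕ) : conv g g n ≤ 16 * g n := by
  rw [conv]
  calc ∑ k ∈ range (n+1), g k * g (n-k)
      ≤ ∑ k ∈ range (n+1), 4 * g n * (g k + g (n-k)) := by
        apply Finset.sum_le_sum
        intro k hk
        exact g_mul_g_le (Nat.lt_succ_iff.mp (mem_range.mp hk))
    _ = 4 * g n * ((∑ k ∈ range (n+1), g k) + ∑ k ∈ range (n+1), g (n-k)) := by
        rw [← Finset.mul_sum, Finset.sum_add_distrib]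
    _ ≤ 4 * g n * (2 + 2) := by
        apply mul_le_mul_of_nonneg_left _ (mul_nonneg (by norm_num) (g_pos n).le)
        apply add_le_add (sum_g_le _)
        have : ∑ k ∈ range (n+1), g (n-k) = ∑ k ∈ range (n+1), g k := by
          have := Finset.sum_range_reflect g (n+1)
          simpa using this
        rw [this]
        exact sum_g_le _
    _ = 16 * g n := by ring

lemma sum_pair_le (m : ℕ) :
    ∑ i ∈ range (m+1), g (i+1) * g (m-i) ≤ 16 * g (m+1) := by
  have key : ∀ i ∈ range (m+1), g (i+1) * g (m-i) ≤ 4 * g (m+1) * (g (i+1) + g (m-i)) := by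
    intro i hi
    have hi' : i ≤ m := Nat.lt_succ_iff.mp (mem_range.mp hi)
    have h1 : (m + 1) - (i + 1) = m - i := Nat.succ_sub_succ m i
    have := g_mul_g_le (show i+1 ≤ m+1 by omega)
    rwa [h1] at this
  calc ∑ i ∈ range (m+1), g (i+1) * g (m-i)
      ≤ ∑ i ∈ range (m+1), 4 * g (m+1) * (g (i+1) + g (m-i)) := Finset.sum_le_sum key
    _ = 4 * g (m+1) * ((∑ i ∈ range (m+1), g (i+1)) + ∑ i ∈ range (m+1), g (m-i)) := by
        rw [← Finset.mul_sum, Finset.sum_add_distrib]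
    _ ≤ 4 * g (m+1) * (2 + 2) := by
        apply mul_le_mul_of_nonneg_left _ (mul_nonneg (by norm_num) (g_pos (m+1)).le)
        apply add_le_add
        · have h1 : ∑ i ∈ range (m+1), g (i+1) ≤ ∑ k ∈ range (m+2), g k := by
            rw [Finset.sum_range_succ' g (m+1)]
            have : (0:ℝ) ≤ g 0 := (g_pos 0).le
            linarith
          exact h1.trans (sum_g_le _)
        · have : ∑ i ∈ range (m+1), g (m-i) = ∑ i ∈ range (m+1), g i := by
            have := Finset.sum_range_reflect g (m+1)
            simpa using this
          rw [this]
          exact sum_g_le _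
    _ = 16 * g (m+1) := by ring

lemma sum_pair_le' (m : ℕ) :
    ∑ i ∈ range m, g (i+1) * g (m-i) ≤ 16 * g (m+1) := by
  have hsub : ∑ i ∈ range m, g (i+1) * g (m-i) ≤ ∑ i ∈ range (m+1), g (i+1) * g (m-i) := by
    apply Finset.sum_le_sum_of_subset_of_nonneg
    · intro x hx; simp at hx ⊢; omega
    · intro i _ _; exact mul_nonneg (g_pos _).le (g_pos _).le
  exact hsub.trans (sum_pair_le m)

/-- convolution bound from weighted geometric bounds. -/
lemma conv_bound_at {u v : ℕ → ℝ} {a b M : ℝ} (ha : 0 ≤ a) (hb : 0 ≤ b) (hM : 0 < M) {n : ℕ}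
    (hu : ∀ i, i ≤ n → |u i| ≤ a * M^i * g i) (hv : ∀ i, i ≤ n → |v i| ≤ b * M^i * g i) :
    |conv u v n| ≤ 16 * (a*b) * M^n * g n := by
  rw [conv]
  calc |∑ k ∈ range (n+1), u k * v (n-k)|
      ≤ ∑ k ∈ range (n+1), |u k * v (n-k)| := abs_sum_le_sum_abs _ _
    _ ≤ ∑ k ∈ range (n+1), a * b * M^n * (g k * g (n-k)) := by
        apply Finset.sum_le_sum
        intro k hk
        have hkn : k ≤ n := Nat.lt_succ_iff.mp (mem_range.mp hk)
        rw [abs_mul]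
        calc |u k| * |v (n-k)| ≤ (a * M^k * g k) * (b * M^(n-k) * g (n-k)) := by
              apply mul_le_mul (hu k hkn) (hv (n-k) (by omega)) (abs_nonneg _)
                (mul_nonneg (mul_nonneg ha (pow_nonneg hM.le _)) (g_pos _).le)
          _ = a * b * (M^k * M^(n-k)) * (g k * g (n-k)) := by ring
          _ = a * b * M^n * (g k * g (n-k)) := by rw [← pow_add, Nat.add_sub_cancel' hkn]
    _ = a * b * M^n * ∑ k ∈ range (n+1), g k * g (n-k) := by rw [← Finset.mul_sum]
    _ ≤ a * b * M^n * (16 * g n) := by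
        apply mul_le_mul_of_nonneg_left _
          (mul_nonneg (mul_nonneg ha hb) (pow_nonneg hM.le _))
        have := conv_g_le n
        rwa [conv] at this
    _ = 16 * (a*b) * M^n * g n := by ring




lemma frac_helper {x M : ℝ} (hx : 1 ≤ x) (hM : 4 ≤ M) : 1/(x^2) ≤ M*x/((x+1)^2) := by
  have e1 : (0:ℝ) < x^2 := by positivity
  have e2 : (0:ℝ) < (x+1)^2 := by positivity
  rw [div_le_div_iff₀ e1 e2]
  have hx0 : 0 < x := lt_of_lt_of_le one_pos hx
  have a1 : (x+1)^2 ≤ 4*x^2 := by nlinarith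
  have a2 : 4*x^2 ≤ 4*(x^2*x) := by nlinarith
  have a3 : 4*(x^2*x) ≤ M*(x^2*x) := by nlinarith
  calc 1*(x+1)^2 = (x+1)^2 := one_mul _
    _ ≤ 4*x^2 := a1
    _ ≤ 4*(x^2*x) := a2
    _ ≤ M*(x^2*x) := a3
    _ = M*x*x^2 := by ring

lemma abs_shift_gavA (j : ℕ) : |shift gavA j| = ((j:ℝ)+1) * |gavA (j+1)| := by
  rw [shift, abs_mul, abs_of_nonneg (by positivity : (0:ℝ) ≤ (j:ℝ)+1)]

theorem shift_gavA_bound : ∃ M : ℝ, 4 ≤ M ∧ ∀ n, |shift gavA n| ≤ M^n * g n := by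
  have key : ∀ M : ℝ, 6144 ≤ M →
      (∀ n ∈ range 402, |shift gavA n| * ((n:ℝ)+1)^2 ≤ M) →
      ∀ n, |shift gavA n| ≤ M^n * g n := ?_
  case _ =>
    obtain ⟨B, hB0, hBn⟩ : ∃ B : ℝ, 0 ≤ B ∧
        ∀ n ∈ range 402, |shift gavA n| * ((n:ℝ)+1)^2 ≤ B := by
      refine ⟨∑ k ∈ range 402, (|shift gavA k| * ((k:ℝ)+1)^2), ?_, ?_⟩
      · apply Finset.sum_nonneg; intro i _; positivity
      · intro n hn
        apply Finset.single_le_sum (f := fun k => |shift gavA k| * ((k:ℝ)+1)^2) _ hn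
        intro i _; positivity
    exact ⟨6144 + B, by linarith,
      key (6144 + B) (by linarith) (fun n hn => (hBn n hn).trans (by linarith))⟩
  intro M hM6144 hBn
  set q : ℕ → ℝ := shift gavA with hq
  have hM1 : (1:ℝ) ≤ M := by linarith
  have hM4 : (4:ℝ) ≤ M := by linarith
  have hM0 : (0:ℝ) < M := by linarith
  intro n
  induction n using Nat.strong_induction_on with
  | _ n ih =>
    rcases lt_or_ge n 402 with hn | hn
    · match n with
      | 0 =>
        have h0 : |q 0| = 3/4 := by
          rw [hq, abs_shift_gavA, gavA_one]
          norm_num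
        rw [h0, pow_zero, g_zero]
        norm_num
      | k + 1 =>
        have h1 := hBn (k+1) (mem_range.mpr hn)
        have hpos : (0:ℝ) < (((k+1:ℕ):ℝ)+1)^2 := by positivity
        have h2 : |q (k+1)| ≤ M / (((k+1:ℕ):ℝ)+1)^2 := by
          rw [le_div_iff₀ hpos]; exact h1
        calc |q (k+1)| ≤ M / (((k+1:ℕ):ℝ)+1)^2 := h2
          _ = M * g (k+1) := by rw [g, div_eq_mul_inv]
          _ ≤ M^(k+1) * g (k+1) := by
              apply mul_le_mul_of_nonneg_right _ (g_pos _).le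
              exact le_self_pow₀ hM1 (Nat.succ_ne_zero k)
    · obtain ⟨m, rfl⟩ : ∃ m, n = m + 1 := ⟨n-1, by omega⟩
      have hm : 401 ≤ m := by omega
      have hp : ∀ i, i ≤ m → |q i| ≤ M^i * g i := fun i hi => ih i (by omega)
      have hp1 : ∀ i, i ≤ m → |q i| ≤ 1 * M^i * g i := by
        intro i hi; rw [one_mul]; exact hp i hi
      have ha : ∀ i, i ≤ m+1 → |gavA i| ≤ 1 * M^i * g i := by
        intro i hi
        match i with
        | 0 => rw [gavA_zero]; simp [g_zero]
        | j+1 =>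
          have hj : j ≤ m := by omega
          have hjpos : (0:ℝ) < (j:ℝ)+1 := by positivity
          have hj1 : (1:ℝ) ≤ (j:ℝ)+1 := by
            have := Nat.cast_nonneg (α := ℝ) j; linarith
          have h1 : ((j:ℝ)+1) * |gavA (j+1)| ≤ M^j * g j := (abs_shift_gavA j) ▸ hp j hj
          have h2 : |gavA (j+1)| ≤ M^j * g j / ((j:ℝ)+1) := by
            rw [le_div_iff₀ hjpos]; linarith [h1]
          have e1 : (0:ℝ) < ((j:ℝ)+1)^2 := by positivity
          have e2 : (0:ℝ) < ((j:ℝ)+2)^2 := by positivity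
          have e3 : (0:ℝ) < M^j := by positivity
          have hg1 : g j = 1/(((j:ℝ)+1)^2) := by rw [g, one_div]
          have hg2 : g (j+1) = 1/(((j:ℝ)+2)^2) := by
            rw [g]; push_cast
            rw [show ((j:ℝ)+1+1) = (j:ℝ)+2 by ring, one_div]
          have hfrac : 1/(((j:ℝ)+1)^2) ≤ M*((j:ℝ)+1)/(((j:ℝ)+2)^2) := by
            have := frac_helper hj1 hM4
            rwa [show ((j:ℝ)+1)+1 = (j:ℝ)+2 by ring] at this
          have h3 : M^j * g j / ((j:ℝ)+1) ≤ 1 * M^(j+1) * g (j+1) := by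
            rw [hg1, hg2, one_mul, pow_succ, div_le_iff₀ hjpos]
            calc M^j * (1/(((j:ℝ)+1)^2)) ≤ M^j * (M*((j:ℝ)+1)/(((j:ℝ)+2)^2)) :=
                  mul_le_mul_of_nonneg_left hfrac e3.le
              _ = M^j * M * (1/(((j:ℝ)+2)^2)) * ((j:ℝ)+1) := by ring
          exact h2.trans h3
      have hpp : ∀ j, j ≤ m → |conv q q j| ≤ 16 * M^j * g j := by
        intro j hj
        have := conv_bound_at (u := q) (v := q) (a := 1) (b := 1) (n := j)
          (by norm_num) (by norm_num) hM0
          (fun i hi => hp1 i (by omega)) (fun i hi => hp1 i (by omega))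
        calc |conv q q j| ≤ 16 * (1*1) * M^j * g j := this
          _ = 16 * M^j * g j := by ring
      have hT1 : |conv q (conv q q) m| ≤ 256 * M^m * g m := by
        have := conv_bound_at (u := q) (v := conv q q) (a := 1) (b := 16) (n := m)
          (by norm_num) (by norm_num) hM0
          (fun i hi => hp1 i hi) (fun i hi => hpp i hi)
        calc |conv q (conv q q) m| ≤ 16 * (1*16) * M^m * g m := this
          _ = 256 * M^m * g m := by ring
      have hmid : |∑ i ∈ range m, q (i+1) * q (m-i)| ≤ 16 * M^(m+1) * g (m+1) := by
        calc |∑ i ∈ range m, q (i+1) * q (m-i)|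
            ≤ ∑ i ∈ range m, |q (i+1) * q (m-i)| := abs_sum_le_sum_abs _ _
          _ ≤ ∑ i ∈ range m, M^(m+1) * (g (i+1) * g (m-i)) := by
              apply Finset.sum_le_sum
              intro i hi
              have hi' : i < m := mem_range.mp hi
              rw [abs_mul]
              calc |q (i+1)| * |q (m-i)|
                  ≤ (M^(i+1) * g (i+1)) * (M^(m-i) * g (m-i)) := by
                    apply mul_le_mul (hp (i+1) (by omega)) (hp (m-i) (by omega))
                      (abs_nonneg _)
                      (mul_nonneg (pow_nonneg hM0.le _) (g_pos _).le)
                _ = (M^(i+1) * M^(m-i)) * (g (i+1) * g (m-i)) := by ring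
                _ = M^(m+1) * (g (i+1) * g (m-i)) := by
                    rw [← pow_add, show i+1+(m-i) = m+1 from by omega]
          _ = M^(m+1) * ∑ i ∈ range m, g (i+1) * g (m-i) := by rw [← Finset.mul_sum]
          _ ≤ M^(m+1) * (16 * g (m+1)) := by
              apply mul_le_mul_of_nonneg_left (sum_pair_le' m) (pow_nonneg hM0.le _)
          _ = 16 * M^(m+1) * g (m+1) := by ring
      have htail : |∑ i ∈ range (m+1), gavA (i+1) * conv q q (m-i)|
          ≤ 256 * M^(m+1) * g (m+1) := by
        calc |∑ i ∈ range (m+1), gavA (i+1) * conv q q (m-i)|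
            ≤ ∑ i ∈ range (m+1), |gavA (i+1) * conv q q (m-i)| := abs_sum_le_sum_abs _ _
          _ ≤ ∑ i ∈ range (m+1), 16 * M^(m+1) * (g (i+1) * g (m-i)) := by
              apply Finset.sum_le_sum
              intro i hi
              have hi' : i ≤ m := Nat.lt_succ_iff.mp (mem_range.mp hi)
              rw [abs_mul]
              calc |gavA (i+1)| * |conv q q (m-i)|
                  ≤ (1 * M^(i+1) * g (i+1)) * (16 * M^(m-i) * g (m-i)) := by
                    apply mul_le_mul (ha (i+1) (by omega)) (hpp (m-i) (by omega))
                      (abs_nonneg _)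
                    apply mul_nonneg (mul_nonneg (by norm_num) (pow_nonneg hM0.le _)) (g_pos _).le
                _ = 16 * (M^(i+1) * M^(m-i)) * (g (i+1) * g (m-i)) := by ring
                _ = 16 * M^(m+1) * (g (i+1) * g (m-i)) := by
                    rw [← pow_add, show i+1+(m-i) = m+1 from by omega]
          _ = 16 * M^(m+1) * ∑ i ∈ range (m+1), g (i+1) * g (m-i) := by rw [← Finset.mul_sum]
          _ ≤ 16 * M^(m+1) * (16 * g (m+1)) := by
              apply mul_le_mul_of_nonneg_left (sum_pair_le m)
              apply mul_nonneg (by norm_num) (pow_nonneg hM0.le _)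
          _ = 256 * M^(m+1) * g (m+1) := by ring
      have hlow : |low gavA m| ≤ 1089 * M^(m+1) * g (m+1) := by
        rw [low, gavA_zero]
        have step1 : |6 * conv q (conv q q) m
            - 4 * (1 * ∑ i ∈ range m, q (i+1) * q (m-i)
                   + ∑ i ∈ range (m+1), gavA (i+1) * conv q q (m-i))|
            ≤ 6 * |conv q (conv q q) m|
              + 4 * (|∑ i ∈ range m, q (i+1) * q (m-i)|
                     + |∑ i ∈ range (m+1), gavA (i+1) * conv q q (m-i)|) := by
          have t1 := abs_sub (6 * conv q (conv q q) m)
            (4 * (1 * ∑ i ∈ range m, q (i+1) * q (m-i)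
                   + ∑ i ∈ range (m+1), gavA (i+1) * conv q q (m-i)))
          have t2 : |6 * conv q (conv q q) m| = 6 * |conv q (conv q q) m| := by
            rw [abs_mul]; norm_num
          have t3 : |4 * (1 * ∑ i ∈ range m, q (i+1) * q (m-i)
                   + ∑ i ∈ range (m+1), gavA (i+1) * conv q q (m-i))|
              ≤ 4 * (|∑ i ∈ range m, q (i+1) * q (m-i)|
                     + |∑ i ∈ range (m+1), gavA (i+1) * conv q q (m-i)|) := by
            rw [abs_mul, one_mul]
            have := abs_add_le (∑ i ∈ range m, q (i+1) * q (m-i))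
              (∑ i ∈ range (m+1), gavA (i+1) * conv q q (m-i))
            have h4 : |(4:ℝ)| = 4 := by norm_num
            rw [h4]
            apply mul_le_mul_of_nonneg_left this (by norm_num)
          calc _ ≤ |6 * conv q (conv q q) m| + |4 * (1 * ∑ i ∈ range m, q (i+1) * q (m-i)
                   + ∑ i ∈ range (m+1), gavA (i+1) * conv q q (m-i))| := t1
            _ ≤ _ := by rw [t2]; linarith [t3]
        have hgm : g m ≤ 4 * g (m+1) := g_succ_le m
        have e1 : (0:ℝ) ≤ M^m := pow_nonneg hM0.le m
        have key1 : 6 * |conv q (conv q q) m| ≤ 1536 * M^m * g m := by linarith [hT1]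
        have key2 : (1536:ℝ) * M^m * g m ≤ 6144 * M^m * g (m+1) := by
          calc (1536:ℝ) * M^m * g m ≤ 1536 * M^m * (4 * g (m+1)) := by
                apply mul_le_mul_of_nonneg_left hgm (by positivity)
            _ = 6144 * M^m * g (m+1) := by ring
        have key3 : (6144:ℝ) * M^m * g (m+1) ≤ M^(m+1) * g (m+1) := by
          rw [pow_succ]
          calc (6144:ℝ) * M^m * g (m+1) = M^m * 6144 * g (m+1) := by ring
            _ ≤ M^m * M * g (m+1) := by
                apply mul_le_mul_of_nonneg_right _ (g_pos _).le
                exact mul_le_mul_of_nonneg_left hM6144 e1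
        calc |_| ≤ _ := step1
          _ ≤ 1536 * M^m * g m + 4 * (16 * M^(m+1) * g (m+1) + 256 * M^(m+1) * g (m+1)) := by
              linarith [hT1, hmid, htail]
          _ ≤ M^(m+1) * g (m+1) + 1088 * (M^(m+1) * g (m+1)) := by
              have := key2.trans key3
              linarith
          _ = 1089 * M^(m+1) * g (m+1) := by ring
      -- use the recursion
      have hEop := Eop_gavA (m+1)
      rw [Eop_succ, gavA_zero, gavA_one] at hEop
      have hco : (3*(m:ℝ) - 8 * 1 * -(3/4)) = 3*(m:ℝ)+6 := by ring
      rw [hco] at hEop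
      -- hEop : (3m+6) * q (m+1) + low gavA m = 0
      have hden : (0:ℝ) < 3*(m:ℝ)+6 := by positivity
      have habs : (3*(m:ℝ)+6) * |q (m+1)| = |low gavA m| := by
        have hlin : (3*(m:ℝ)+6) * q (m+1) = - low gavA m := by linarith [hEop]
        calc (3*(m:ℝ)+6) * |q (m+1)| = |(3*(m:ℝ)+6) * q (m+1)| := by
              rw [abs_mul, abs_of_pos hden]
          _ = |low gavA m| := by rw [hlin, abs_neg]
      have hm' : (401:ℝ) ≤ (m:ℝ) := by exact_mod_cast hm
      have hfinal : (3*(m:ℝ)+6) * |q (m+1)| ≤ (3*(m:ℝ)+6) * (M^(m+1) * g (m+1)) := by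
        rw [habs]
        calc |low gavA m| ≤ 1089 * M^(m+1) * g (m+1) := hlow
          _ ≤ (3*(m:ℝ)+6) * (M^(m+1) * g (m+1)) := by
              have hg : (0:ℝ) ≤ M^(m+1) * g (m+1) :=
                mul_nonneg (pow_nonneg hM0.le _) (g_pos _).le
              have : (1089:ℝ) ≤ 3*(m:ℝ)+6 := by linarith
              calc (1089:ℝ) * M^(m+1) * g (m+1) = 1089 * (M^(m+1) * g (m+1)) := by ring
                _ ≤ (3*(m:ℝ)+6) * (M^(m+1) * g (m+1)) :=
                    mul_le_mul_of_nonneg_right this hg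
      exact le_of_mul_le_mul_left hfinal hden

theorem geo_gavA : Geo gavA := by
  obtain ⟨M, hM4, hbd⟩ := shift_gavA_bound
  have hM1 : (1:ℝ) ≤ M := by linarith
  have hM0 : (0:ℝ) < M := by linarith
  refine ⟨1, M, one_pos, hM1, fun n => ?_⟩
  rw [one_mul]
  match n with
  | 0 => rw [gavA_zero]; simp
  | k+1 =>
    have h1 : ((k:ℝ)+1) * |gavA (k+1)| ≤ M^k * g k := (abs_shift_gavA k) ▸ hbd k
    have hk1 : (1:ℝ) ≤ (k:ℝ)+1 := by
      have := Nat.cast_nonneg (α := ℝ) k; linarith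
    have h2 : |gavA (k+1)| ≤ M^k * g k := by
      nlinarith [abs_nonneg (gavA (k+1))]
    calc |gavA (k+1)| ≤ M^k * g k := h2
      _ ≤ M^k * 1 := mul_le_mul_of_nonneg_left (g_le_one k) (pow_nonneg hM0.le _)
      _ = M^k := mul_one _
      _ ≤ M^(k+1) := by
          apply pow_le_pow_right₀ hM1 (Nat.le_succ k)




/-- Packaged facts on a small ball. -/
lemma geo_master {c : ℕ → ℝ} (h : Geo c) :
    ∃ r > 0, ∀ x : ℝ, |x| < r →
      Summable (fun n => c n * x ^ n) ∧ deriv (S c) x = S (shift c) x := by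
  obtain ⟨C, M, hC, hM, hb⟩ := h
  have hM0 : (0:ℝ) < M := by linarith
  refine ⟨(2*M)⁻¹, by positivity, fun x hx => ⟨?_, ?_⟩⟩
  · apply summable_aux hb hM0
    have h1 : M * |x| < M * (2*M)⁻¹ := by
      apply mul_lt_mul_of_pos_left hx hM0
    have h2 : M * (2*M)⁻¹ = 2⁻¹ := by
      field_simp
    rw [h2] at h1
    linarith
  · exact (hasDerivAt_S hb hC hM hx).deriv

lemma geo_small {c : ℕ → ℝ} {C M x : ℝ} (hb : ∀ n, |c n| ≤ C * M ^ n) (hM : 1 ≤ M)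
    (hx : |x| < (2*M)⁻¹) : M * |x| < 1 := by
  have hM0 : (0:ℝ) < M := by linarith
  have h1 : M * |x| < M * (2*M)⁻¹ := mul_lt_mul_of_pos_left hx hM0
  have h2 : M * (2*M)⁻¹ = 2⁻¹ := by field_simp
  rw [h2] at h1
  linarith

lemma geo_mul {u v : ℕ → ℝ} (hu : Geo u) (hv : Geo v) :
    ∃ r > 0, ∀ x : ℝ, |x| < r → S u x * S v x = S (conv u v) x := by
  obtain ⟨C, M, hC, hM, hbu⟩ := hu
  obtain ⟨D, N, hD, hN, hbv⟩ := hv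
  have hM0 : (0:ℝ) < M := by linarith
  have hN0 : (0:ℝ) < N := by linarith
  refine ⟨min ((2*M)⁻¹) ((2*N)⁻¹), by positivity, fun x hx => ?_⟩
  exact S_mul hbu hM0 hbv hN0
    (geo_small hbu hM (lt_of_lt_of_le hx (min_le_left _ _)))
    (geo_small hbv hN (lt_of_lt_of_le hx (min_le_right _ _)))

lemma geo_xshift {u : ℕ → ℝ} (hu : Geo u) :
    ∃ r > 0, ∀ x : ℝ, |x| < r → S (xshift u) x = x * S u x := by
  obtain ⟨C, M, hC, hM, hbu⟩ := hu
  have hM0 : (0:ℝ) < M := by linarith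
  exact ⟨(2*M)⁻¹, by positivity, fun x hx =>
    S_xshift hbu hM0 (geo_small hbu hM hx)⟩

/-- Master identity: the ODE expression applied to `S c` equals `S (Eop c)` near `0`. -/
lemma ode_S {c : ℕ → ℝ} (hc : Geo c) : ∀ᶠ x in 𝓝 (0:ℝ),
    3 * x * deriv (deriv (S c)) x + 6 * x * (deriv (S c) x)^3
      - 4 * S c x * (deriv (S c) x)^2 - 3 * deriv (S c) x = S (Eop c) x := by
  have hp : Geo (shift c) := hc.shift
  have hsp : Geo (shift (shift c)) := hp.shift
  have hpp : Geo (conv (shift c) (shift c)) := hp.conv hp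
  have hppp : Geo (conv (shift c) (conv (shift c) (shift c))) := hp.conv hpp
  have hq4 : Geo (conv c (conv (shift c) (shift c))) := hc.conv hpp
  have hxsp : Geo (xshift (shift (shift c))) := hsp.xshift
  have hxppp : Geo (xshift (conv (shift c) (conv (shift c) (shift c)))) := hppp.xshift
  obtain ⟨r1, hr1, h1⟩ := geo_master hc
  obtain ⟨r2, hr2, h2⟩ := geo_master hp
  obtain ⟨r3, hr3, h3⟩ := geo_mul hp hp
  obtain ⟨r4, hr4, h4⟩ := geo_mul hp hpp
  obtain ⟨r5, hr5, h5⟩ := geo_mul hc hpp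
  obtain ⟨r6, hr6, h6⟩ := geo_xshift hsp
  obtain ⟨r7, hr7, h7⟩ := geo_xshift hppp
  obtain ⟨r8, hr8, h8⟩ := geo_master hxsp
  obtain ⟨r9, hr9, h9⟩ := geo_master hxppp
  obtain ⟨r10, hr10, h10⟩ := geo_master hq4
  set r := min r1 (min r2 (min r3 (min r4 (min r5 (min r6 (min r7 (min r8 (min r9 r10))))))))
    with hrdef
  have hr : 0 < r := by
    simp only [hrdef, lt_min_iff]
    exact ⟨hr1, hr2, hr3, hr4, hr5, hr6, hr7, hr8, hr9, hr10⟩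
  rw [Metric.eventually_nhds_iff]
  refine ⟨r, hr, fun {x} hx => ?_⟩
  rw [dist_zero_right, Real.norm_eq_abs] at hx
  have hx1 : |x| < r1 := lt_of_lt_of_le hx (by simp [hrdef])
  have hx2 : |x| < r2 := lt_of_lt_of_le hx (by simp [hrdef])
  have hx3 : |x| < r3 := lt_of_lt_of_le hx (by simp [hrdef])
  have hx4 : |x| < r4 := lt_of_lt_of_le hx (by simp [hrdef])
  have hx5 : |x| < r5 := lt_of_lt_of_le hx (by simp [hrdef])
  have hx6 : |x| < r6 := lt_of_lt_of_le hx (by simp [hrdef])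
  have hx7 : |x| < r7 := lt_of_lt_of_le hx (by simp [hrdef])
  have hx8 : |x| < r8 := lt_of_lt_of_le hx (by simp [hrdef])
  have hx9 : |x| < r9 := lt_of_lt_of_le hx (by simp [hrdef])
  have hx10 : |x| < r10 := lt_of_lt_of_le hx (by simp [hrdef])
  -- first derivative
  have e1 : deriv (S c) x = S (shift c) x := (h1 x hx1).2
  -- second derivative
  have e2 : deriv (deriv (S c)) x = S (shift (shift c)) x := by
    have heq : deriv (S c) =ᶠ[𝓝 x] S (shift c) := by
      rw [Filter.eventuallyEq_iff_exists_mem]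
      refine ⟨Metric.ball 0 r1, ?_, fun y hy => ?_⟩
      · exact Metric.isOpen_ball.mem_nhds (by simpa [Real.dist_eq] using hx1)
      · have hy' : |y| < r1 := by simpa [Real.dist_eq] using hy
        exact (h1 y hy').2
    rw [heq.deriv_eq]
    exact (h2 x hx2).2
  -- summabilities
  have s1 : Summable (fun n => xshift (shift (shift c)) n * x ^ n) := (h8 x hx8).1
  have s2 : Summable (fun n => xshift (conv (shift c) (conv (shift c) (shift c))) n * x ^ n) :=
    (h9 x hx9).1
  have s3 : Summable (fun n => conv c (conv (shift c) (shift c)) n * x ^ n) := (h10 x hx10).1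
  have s4 : Summable (fun n => shift c n * x ^ n) := (h2 x hx2).1
  -- split S (Eop c)
  have split : S (Eop c) x
      = 3 * S (xshift (shift (shift c))) x
        + 6 * S (xshift (conv (shift c) (conv (shift c) (shift c)))) x
        - 4 * S (conv c (conv (shift c) (shift c))) x
        - 3 * S (shift c) x := by
    have s1' := s1.mul_left 3
    have s2' := s2.mul_left 6
    have s3' := s3.mul_left 4
    have s4' := s4.mul_left 3
    have hA : Summable (fun n => (3 * xshift (shift (shift c)) n
        + 6 * xshift (conv (shift c) (conv (shift c) (shift c))) n) * x ^ n) := by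
      have := (s1.mul_left 3).add (s2.mul_left 6)
      apply this.congr
      intro n; ring
    have hB : Summable (fun n => (3 * xshift (shift (shift c)) n
        + 6 * xshift (conv (shift c) (conv (shift c) (shift c))) n
        - 4 * conv c (conv (shift c) (shift c)) n) * x ^ n) := by
      have := hA.sub (s3.mul_left 4)
      apply this.congr
      intro n; ring
    have h3' : Summable (fun n => (3 * shift c n) * x ^ n) := by
      apply (s4.mul_left 3).congr
      intro n; ring
    have h4' : Summable (fun n => (4 * conv c (conv (shift c) (shift c)) n) * x ^ n) := by
      apply (s3.mul_left 4).congr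
      intro n; ring
    calc S (Eop c) x
        = S (fun n => (3 * xshift (shift (shift c)) n
            + 6 * xshift (conv (shift c) (conv (shift c) (shift c))) n
            - 4 * conv c (conv (shift c) (shift c)) n)
            - (fun n => 3 * shift c n) n) x := rfl
      _ = S (fun n => 3 * xshift (shift (shift c)) n
            + 6 * xshift (conv (shift c) (conv (shift c) (shift c))) n
            - 4 * conv c (conv (shift c) (shift c)) n) x
          - S (fun n => 3 * shift c n) x := S_sub hB h3'
      _ = (S (fun n => 3 * xshift (shift (shift c)) n
            + 6 * xshift (conv (shift c) (conv (shift c) (shift c))) n) x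
          - S (fun n => 4 * conv c (conv (shift c) (shift c)) n) x)
          - S (fun n => 3 * shift c n) x := by rw [S_sub hA h4']
      _ = (S (fun n => 3 * xshift (shift (shift c)) n) x
            + S (fun n => 6 * xshift (conv (shift c) (conv (shift c) (shift c))) n) x
          - S (fun n => 4 * conv c (conv (shift c) (shift c)) n) x)
          - S (fun n => 3 * shift c n) x := by
            rw [S_add (by apply s1'.congr; intro n; ring) (by apply s2'.congr; intro n; ring)]
      _ = _ := by rw [S_const_mul, S_const_mul, S_const_mul, S_const_mul]
  -- products
  have e3 : S (shift c) x * S (shift c) x = S (conv (shift c) (shift c)) x := h3 x hx3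
  have e4 : S (shift c) x * S (conv (shift c) (shift c)) x
      = S (conv (shift c) (conv (shift c) (shift c))) x := h4 x hx4
  have e5 : S c x * S (conv (shift c) (shift c)) x
      = S (conv c (conv (shift c) (shift c))) x := h5 x hx5
  have e6 : S (xshift (shift (shift c))) x = x * S (shift (shift c)) x := h6 x hx6
  have e7 : S (xshift (conv (shift c) (conv (shift c) (shift c)))) x
      = x * S (conv (shift c) (conv (shift c) (shift c))) x := h7 x hx7
  rw [split, e6, e7, e1, e2, ← e4, ← e3, ← e5, ← e3]
  ring

/-- The solution. -/
theorem gavS_props :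
    AnalyticAt ℝ (S gavA) 0 ∧ S gavA 0 = 1 ∧ deriv (S gavA) 0 = -(3/4) ∧
    (∀ᶠ x in 𝓝 (0:ℝ),
      3 * x * deriv (deriv (S gavA)) x + 6 * x * (deriv (S gavA) x)^3
        - 4 * S gavA x * (deriv (S gavA) x)^2 - 3 * deriv (S gavA) x = 0) := by
  have hgeo := geo_gavA
  have hSE : ∀ x : ℝ, S (Eop gavA) x = 0 := by
    intro x
    rw [S]
    have : ∀ n : ℕ, Eop gavA n * x ^ n = 0 := by
      intro n; rw [Eop_gavA n, zero_mul]
    calc ∑' n, Eop gavA n * x ^ n = ∑' _n : ℕ, (0:ℝ) := tsum_congr this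
      _ = 0 := tsum_zero
  refine ⟨analyticAt_S hgeo, ?_, ?_, ?_⟩
  · rw [S_zero, gavA_zero]
  · obtain ⟨r, hr, h⟩ := geo_master hgeo
    have := (h 0 (by simpa using hr)).2
    rw [this, S_zero]
    rw [shift]
    rw [gavA_one]
    norm_num
  · filter_upwards [ode_S hgeo] with x hx
    rw [hx, hSE]

theorem gav_unique {φ : ℝ → ℝ}
    (han : AnalyticAt ℝ φ 0) (h0 : φ 0 = 1) (h1 : deriv φ 0 = -(3/4))
    (hode : ∀ᶠ x in 𝓝 (0:ℝ),
      3 * x * deriv (deriv φ) x + 6 * x * (deriv φ x)^3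
        - 4 * φ x * (deriv φ x)^2 - 3 * deriv φ x = 0) :
    φ =ᶠ[𝓝 (0:ℝ)] S gavA := by
  obtain ⟨c, hgeo, hphi⟩ := exists_geo_coeffs han
  -- initial conditions
  have hc0 : c 0 = 1 := by
    have := hphi.eq_of_nhds
    rw [S_zero] at this
    rw [← this, h0]
  have hD : deriv φ =ᶠ[𝓝 (0:ℝ)] deriv (S c) := hphi.deriv
  obtain ⟨r, hr, hmaster⟩ := geo_master hgeo
  have hc1 : c 1 = -(3/4) := by
    have hd0 : deriv φ 0 = deriv (S c) 0 := hD.eq_of_nhds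
    have hd1 : deriv (S c) 0 = S (shift c) 0 := (hmaster 0 (by simpa using hr)).2
    have hd2 : S (shift c) 0 = shift c 0 := S_zero _
    have hd3 : shift c 0 = c 1 := by rw [shift]; norm_num
    rw [h1] at hd0
    rw [← hd3, ← hd2, ← hd1, ← hd0]
  -- transfer the ODE
  have hDD : deriv (deriv φ) =ᶠ[𝓝 (0:ℝ)] deriv (deriv (S c)) := hD.deriv
  have hSE : S (Eop c) =ᶠ[𝓝 (0:ℝ)] 0 := by
    filter_upwards [hode, hphi, hD, hDD, ode_S hgeo] with x k0 k1 k2 k3 k4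
    rw [← k1, ← k2, ← k3] at k4
    rw [← k4]
    exact k0
  -- Geo (Eop c)
  have hgeoE : Geo (Eop c) := by
    have hp : Geo (shift c) := hgeo.shift
    have hsp : Geo (shift (shift c)) := hp.shift
    have hpp : Geo (conv (shift c) (shift c)) := hp.conv hp
    have hppp : Geo (conv (shift c) (conv (shift c) (shift c))) := hp.conv hpp
    have hq4 : Geo (conv c (conv (shift c) (shift c))) := hgeo.conv hpp
    exact ((((hsp.xshift.const_mul 3).add (hppp.xshift.const_mul 6)).sub
      (hq4.const_mul 4)).sub (hp.const_mul 3))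
  have hEzero : ∀ n, Eop c n = 0 := coeff_eq_zero_of_S_zero hgeoE hSE
  have hcg : ∀ n, c n = gavA n := coeff_unique hc0 hc1 hEzero
  have hSeq : S c = S gavA := by
    have : c = gavA := funext hcg
    rw [this]
  exact hphi.trans (by rw [hSeq])


end Gav
end GavAux


/-- Lemma 1: the singular Cauchy problem has a unique analytic solution near `0`. -/
theorem gavrilov_ode_exists_unique :
    ∃ ψ : ℝ → ℝ, GavrilovODE ψ ∧
      ∀ φ : ℝ → ℝ, GavrilovODE φ → φ =ᶠ[nhds (0:ℝ)] ψ := by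
  refine ⟨Gav.S Gav.gavA, Gav.gavS_props, ?_⟩
  intro φ hφ
  obtain ⟨han, h0, h1, hode⟩ := hφ
  exact Gav.gav_unique han h0 h1 hode
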